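/- Let n₀, n₁, n₂ ∈ ℝ³ with ‖n_i‖ ≤ 1 for each i, lying in a common plane through the origin (there exists a nonzero w ∈ ℝ³ with ⟨w, n_i⟩ = 0 for all i), and let M⁰, M¹, M² be the corresponding unbiased binary qubit POVMs with effects M^i_z = (1/2)(I + (−1)^z n_i·σ), z ∈ {0,1}. Then the three measurements are not fully incompatible with respect to disjoint-convex-mixing: there exist a permutation (i,j,k) of (0,1,2) and q ∈ [0,1] such that the binary qubit POVMs M^i and (q M^j_z + (1−q) M^k_z)_{z∈{0,1}} are jointly measurable. -/

import Mathlib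

open Matrix Finset
open scoped ComplexOrder

noncomputable section

/-- A `d`-outcome POVM on `ℂ^n`: positive semidefinite effects summing to the identity. -/
def IsPOVM {n d : ℕ} (M : Fin d → Matrix (Fin n) (Fin n) ℂ) : Prop :=
  (∀ z, (M z).PosSemidef) ∧ ∑ z, M z = 1

/-- Coarse-graining of a `d`-outcome POVM along `f : Fin d → Fin k`. -/
def coarseGrain {n d k : ℕ} (M : Fin d → Matrix (Fin n) (Fin n) ℂ) (f : Fin d → Fin k)
    (z' : Fin k) : Matrix (Fin n) (Fin n) ℂ :=
  ∑ z ∈ Finset.univ.filter (fun z => f z = z'), M z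

/-- Compatibility of a finite family of `d`-outcome POVMs: existence of a parent POVM
`G` together with classical post-processings `p`. -/
def Compatible {n m d : ℕ} (M : Fin m → Fin d → Matrix (Fin n) (Fin n) ℂ) : Prop :=
  ∃ (L : ℕ) (G : Fin L → Matrix (Fin n) (Fin n) ℂ) (p : Fin m → Fin d → Fin L → ℝ),
    (∀ l, (G l).PosSemidef) ∧ (∑ l, G l = 1) ∧
    (∀ x z l, 0 ≤ p x z l) ∧ (∀ x l, ∑ z, p x z l = 1) ∧
    (∀ x z, M x z = ∑ l, (p x z l : ℂ) • G l)

/-- Joint measurability of two POVMs via a joint parent POVM with marginals `A` and `B`. -/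
def JointlyMeasurable {n a b : ℕ} (A : Fin a → Matrix (Fin n) (Fin n) ℂ)
    (B : Fin b → Matrix (Fin n) (Fin n) ℂ) : Prop :=
  ∃ G : Fin a → Fin b → Matrix (Fin n) (Fin n) ℂ,
    (∀ i j, (G i j).PosSemidef) ∧ (∑ i, ∑ j, G i j = 1) ∧
    (∀ i, A i = ∑ j, G i j) ∧ (∀ j, B j = ∑ i, G i j)

/-- The Pauli matrix `σ_x`. -/
def σx : Matrix (Fin 2) (Fin 2) ℂ := !![0, 1; 1, 0]

/-- The Pauli matrix `σ_y`. -/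
def σy : Matrix (Fin 2) (Fin 2) ℂ := !![0, -Complex.I; Complex.I, 0]

/-- The Pauli matrix `σ_z`. -/
def σz : Matrix (Fin 2) (Fin 2) ℂ := !![1, 0; 0, -1]

/-- The unbiased binary qubit POVM with Bloch vector `v`: effects `(1/2)(I + (−1)^z v·σ)`. -/
def bloch (v : EuclideanSpace ℝ (Fin 3)) (z : Fin 2) : Matrix (Fin 2) (Fin 2) ℂ :=
  (1/2 : ℂ) • (1 + ((-1 : ℂ)) ^ (z : ℕ) •
    ((v 0 : ℂ) • σx + (v 1 : ℂ) • σy + (v 2 : ℂ) • σz))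

set_option maxHeartbeats 2000000

private lemma quad_aux (v0 v1 v2 a b c d e : ℝ) (hv : v0^2 + v1^2 + v2^2 ≤ 1)
    (he : e = 1 ∨ e = -1) :
    0 ≤ a * (2⁻¹ * (1 + e*v2) * a + (2⁻¹ * (e*v0) * c + 2⁻¹ * (e*v1) * d)) +
        b * (2⁻¹ * (1 + e*v2) * b + (2⁻¹ * (e*v0) * d + -(2⁻¹ * (e*v1) * c))) +
      (c * (2⁻¹ * (e*v0) * a - 2⁻¹ * (e*v1) * b + 2⁻¹ * (1 + -(e*v2)) * c) +
        d * (2⁻¹ * (e*v0) * b + 2⁻¹ * (e*v1) * a + 2⁻¹ * (1 + -(e*v2)) * d)) := by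
  have hX : (0:ℝ) ≤ a^2+b^2+c^2+d^2 := by positivity
  have he2 : e^2 = 1 := by rcases he with h|h <;> simp [h]
  have key : (e*v2*(a^2+b^2-c^2-d^2) + e*v0*(2*(a*c+b*d)) + e*v1*(2*(a*d-b*c)))^2
      ≤ (a^2+b^2+c^2+d^2)^2 := by
    nlinarith [sq_nonneg (v0*(a^2+b^2-c^2-d^2) - v2*(2*(a*c+b*d))),
      sq_nonneg (v1*(a^2+b^2-c^2-d^2) - v2*(2*(a*d-b*c))),
      sq_nonneg (v0*(2*(a*d-b*c)) - v1*(2*(a*c+b*d))),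
      mul_nonneg (sub_nonneg.2 hv) (sq_nonneg (a^2+b^2+c^2+d^2))]
  nlinarith [key, hX, sq_nonneg (a^2+b^2+c^2+d^2 +
    (e*v2*(a^2+b^2-c^2-d^2) + e*v0*(2*(a*c+b*d)) + e*v1*(2*(a*d-b*c))))]

lemma norm_sq_le (v : EuclideanSpace ℝ (Fin 3)) (hv : ‖v‖ ≤ 1) :
    v 0^2 + v 1^2 + v 2^2 ≤ 1 := by
  have h1 : ‖v‖^2 ≤ 1 := by nlinarith [norm_nonneg v]
  have h2 : ‖v‖^2 = v 0^2 + v 1^2 + v 2^2 := by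
    rw [EuclideanSpace.norm_eq]
    rw [Real.sq_sqrt (by positivity)]
    simp [Fin.sum_univ_three, sq_abs]
  linarith [h2 ▸ h1]

lemma bloch_psd (v : EuclideanSpace ℝ (Fin 3)) (hv : ‖v‖ ≤ 1) (z : Fin 2) :
    (bloch v z).PosSemidef := by
  have hv2 := norm_sq_le v hv
  rw [Matrix.posSemidef_iff_dotProduct_mulVec]
  constructor
  · ext i j
    fin_cases z <;> fin_cases i <;> fin_cases j <;>
      simp [bloch, σx, σy, σz, Matrix.conjTranspose_apply, Matrix.one_apply,
        Complex.ext_iff] <;> ring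
  · intro x
    rw [Complex.le_def]
    fin_cases z <;>
    · constructor
      · simp only [bloch, σx, σy, σz, dotProduct, Matrix.mulVec, Fin.sum_univ_two,
          Matrix.smul_apply, Matrix.add_apply, Matrix.one_apply, Pi.star_apply]
        simp [Complex.add_re, Complex.mul_re, Complex.mul_im, Complex.add_im,
          Matrix.one_apply, dotProduct, Matrix.mulVec, Fin.sum_univ_two]
        nlinarith [quad_aux (v 0) (v 1) (v 2) ((x 0).re) ((x 0).im) ((x 1).re) ((x 1).im)
          1 hv2 (Or.inl rfl),
          quad_aux (v 0) (v 1) (v 2) ((x 0).re) ((x 0).im) ((x 1).re) ((x 1).im)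
          (-1) hv2 (Or.inr rfl)]
      · simp [bloch, σx, σy, σz, dotProduct, Matrix.mulVec, Fin.sum_univ_two,
          Matrix.one_apply, Complex.add_im, Complex.mul_im, Complex.mul_re]
        ring

lemma bloch_sum (v : EuclideanSpace ℝ (Fin 3)) : bloch v 0 + bloch v 1 = 1 := by
  simp only [bloch]
  norm_num
  module

lemma bloch_mix (q : ℝ) (b c : EuclideanSpace ℝ (Fin 3)) (z : Fin 2) :
    (q : ℂ) • bloch b z + ((1 - q : ℝ) : ℂ) • bloch c z
      = bloch (q • b + (1 - q) • c) z := by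
  simp only [bloch, PiLp.add_apply, PiLp.smul_apply, smul_eq_mul]
  push_cast
  match_scalars <;> ring

lemma psd_smul {M : Matrix (Fin 2) (Fin 2) ℂ} (h : M.PosSemidef) {c : ℝ} (hc : 0 ≤ c) :
    ((c : ℂ) • M).PosSemidef := by
  rw [Matrix.posSemidef_iff_dotProduct_mulVec]
  constructor
  · show ((c:ℂ) • M).conjTranspose = _
    rw [Matrix.conjTranspose_smul, h.1]
    congr 1
    simp [Complex.ext_iff]
  · intro x
    rw [Matrix.smul_mulVec, dotProduct_smul, smul_eq_mul]
    exact mul_nonneg (by exact_mod_cast hc) (h.dotProduct_mulVec_nonneg x)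

lemma jm_symm {n a b : ℕ} {A : Fin a → Matrix (Fin n) (Fin n) ℂ}
    {B : Fin b → Matrix (Fin n) (Fin n) ℂ} (h : JointlyMeasurable A B) :
    JointlyMeasurable B A := by
  obtain ⟨G, h1, h2, h3, h4⟩ := h
  exact ⟨fun j i => G i j, fun j i => h1 i j, by rw [Finset.sum_comm]; exact h2, h4, h3⟩

lemma jm_scaled (u : EuclideanSpace ℝ (Fin 3)) (hu : ‖u‖ ≤ 1) (t : ℝ) (ht : |t| ≤ 1) :
    JointlyMeasurable (bloch u) (bloch (t • u)) := by
  have hab := abs_le.1 ht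
  refine ⟨fun z z' => (((1 + (-1 : ℝ)^((z:ℕ)+(z':ℕ)) * t)/2 : ℝ) : ℂ) • bloch u z,
    ?_, ?_, ?_, ?_⟩
  · intro z z'
    refine psd_smul (bloch_psd u hu z) ?_
    rcases Nat.even_or_odd ((z:ℕ)+(z':ℕ)) with he|ho
    · rw [he.neg_one_pow]; linarith
    · rw [ho.neg_one_pow]; linarith
  · have h01 := bloch_sum u
    simp only [Fin.sum_univ_two]
    push_cast
    norm_num
    linear_combination (norm := module) h01
  · intro z
    simp only [Fin.sum_univ_two]
    fin_cases z <;>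
    · push_cast
      norm_num
      module
  · intro z'
    simp only [Fin.sum_univ_two]
    ext i j
    fin_cases z' <;> fin_cases i <;> fin_cases j <;>
    · simp only [bloch, σx, σy, σz, Matrix.add_apply, Matrix.smul_apply, Matrix.one_apply,
        Matrix.of_apply, Matrix.cons_val', Matrix.cons_val_zero, Matrix.cons_val_one,
        Matrix.head_cons, Matrix.head_fin_const, Matrix.empty_val', Matrix.cons_val_fin_one,
        PiLp.smul_apply, smul_eq_mul, Fin.isValue, Fin.val_zero, Fin.val_one, pow_zero, pow_one]
      push_cast
      ring

lemma jm_collinear (u v : EuclideanSpace ℝ (Fin 3)) (hu : ‖u‖ ≤ 1) (hv : ‖v‖ ≤ 1)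
    (t : ℝ) (h : v = t • u) : JointlyMeasurable (bloch u) (bloch v) := by
  rcases le_or_gt |t| 1 with ht|ht
  · rw [h]; exact jm_scaled u hu t ht
  · have ht0 : t ≠ 0 := by
      intro h0
      rw [h0] at ht; simp at ht; linarith
    have hut : u = t⁻¹ • v := by rw [h, smul_smul, inv_mul_cancel₀ ht0, one_smul]
    have hinv : |t⁻¹| ≤ 1 := by
      rw [abs_inv]
      have h1 : (0:ℝ) < |t| := by linarith
      rw [inv_le_one_iff₀]
      right; linarith
    have hjm := jm_scaled v hv t⁻¹ hinv
    rw [← hut] at hjm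
    exact jm_symm hjm

lemma mix_norm_le (q : ℝ) (hq : q ∈ Set.Icc (0:ℝ) 1) (b c : EuclideanSpace ℝ (Fin 3))
    (hb : ‖b‖ ≤ 1) (hc : ‖c‖ ≤ 1) : ‖q • b + (1-q) • c‖ ≤ 1 := by
  obtain ⟨h0, h1⟩ := hq
  calc ‖q • b + (1-q) • c‖ ≤ ‖q • b‖ + ‖(1-q) • c‖ := norm_add_le _ _
    _ = |q| * ‖b‖ + |1-q| * ‖c‖ := by rw [norm_smul, norm_smul, Real.norm_eq_abs, Real.norm_eq_abs]
    _ = q * ‖b‖ + (1-q) * ‖c‖ := by rw [abs_of_nonneg h0, abs_of_nonneg (by linarith)]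
    _ ≤ q * 1 + (1-q) * 1 := by
        have := norm_nonneg b
        have := norm_nonneg c
        nlinarith
    _ = 1 := by ring

lemma jm_mix (a b c : EuclideanSpace ℝ (Fin 3)) (ha : ‖a‖ ≤ 1) (hb : ‖b‖ ≤ 1) (hc : ‖c‖ ≤ 1)
    (q : ℝ) (hq : q ∈ Set.Icc (0:ℝ) 1) (t : ℝ) (hmix : q • b + (1-q) • c = t • a) :
    JointlyMeasurable (bloch a)
      (fun z => (q : ℂ) • bloch b z + ((1 - q : ℝ) : ℂ) • bloch c z) := by
  have hfun : (fun z => (q : ℂ) • bloch b z + ((1 - q : ℝ) : ℂ) • bloch c z)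
      = bloch (q • b + (1-q) • c) := funext fun z => bloch_mix q b c z
  rw [hfun, hmix]
  exact jm_collinear a (t • a) ha (by rw [← hmix]; exact mix_norm_le q hq b c hb hc) t rfl

lemma mix_of_sum {V : Type*} [AddCommGroup V] [Module ℝ V] (a b c : V) (α β γ : ℝ)
    (h : α • a = β • b + γ • c) (hβ : 0 ≤ β) (hγ : 0 ≤ γ) (hβγ : β + γ ≠ 0) :
    ∃ q ∈ Set.Icc (0:ℝ) 1, ∃ t : ℝ, q • b + (1-q) • c = t • a := by
  have hpos : 0 < β + γ := lt_of_le_of_ne (by linarith) (Ne.symm hβγ)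
  refine ⟨β/(β+γ), ⟨by positivity, by rw [div_le_one hpos]; linarith⟩, α/(β+γ), ?_⟩
  have h1 : (1 : ℝ) - β/(β+γ) = γ/(β+γ) := by field_simp; ring
  rw [h1]
  have h2 := congrArg (fun x => ((β+γ)⁻¹ : ℝ) • x) h
  simp only [smul_add, smul_smul] at h2
  rw [div_eq_inv_mul, div_eq_inv_mul, div_eq_inv_mul]
  exact h2.symm

lemma signcases {V : Type*} [AddCommGroup V] [Module ℝ V] (x y z : V) (p q r : ℝ)
    (hp : 0 < p) (hsum : p • x + q • y + r • z = 0) :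
    (∃ β γ α : ℝ, 0 ≤ β ∧ 0 ≤ γ ∧ β + γ ≠ 0 ∧ α • x = β • y + γ • z) ∨
    (∃ β γ α : ℝ, 0 ≤ β ∧ 0 ≤ γ ∧ β + γ ≠ 0 ∧ α • y = β • x + γ • z) ∨
    (∃ β γ α : ℝ, 0 ≤ β ∧ 0 ≤ γ ∧ β + γ ≠ 0 ∧ α • z = β • x + γ • y) := by
  rcases le_or_gt 0 q with hq|hq
  · refine Or.inr (Or.inr ⟨p, q, -r, hp.le, hq, by positivity, ?_⟩)
    linear_combination (norm := module) (-1 : ℝ) • hsum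
  · rcases le_or_gt 0 r with hr|hr
    · refine Or.inr (Or.inl ⟨p, r, -q, hp.le, hr, by positivity, ?_⟩)
      linear_combination (norm := module) (-1 : ℝ) • hsum
    · refine Or.inl ⟨-q, -r, p, by linarith, by linarith, by intro h; nlinarith, ?_⟩
      linear_combination (norm := module) hsum

open scoped RealInnerProductSpace in
lemma dep (n : Fin 3 → EuclideanSpace ℝ (Fin 3)) (w : EuclideanSpace ℝ (Fin 3))
    (hw : w ≠ 0) (hperp : ∀ i, ⟪w, n i⟫ = 0) :
    ∃ g : Fin 3 → ℝ, (∑ i, g i • n i = 0) ∧ ∃ i, g i ≠ 0 := by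
  haveI : Fact (Module.finrank ℝ (EuclideanSpace ℝ (Fin 3)) = 2 + 1) :=
    ⟨by simp [finrank_euclideanSpace_fin]⟩
  have hK : Module.finrank ℝ ((ℝ ∙ w)ᗮ : Submodule ℝ (EuclideanSpace ℝ (Fin 3))) = 2 :=
    Submodule.finrank_orthogonal_span_singleton hw
  have hmem : ∀ i, n i ∈ (ℝ ∙ w)ᗮ := fun i =>
    Submodule.mem_orthogonal_singleton_iff_inner_right.2 (hperp i)
  have hnl : ¬ LinearIndependent ℝ (fun i => (⟨n i, hmem i⟩ : (ℝ ∙ w)ᗮ)) := by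
    intro h
    have := h.fintype_card_le_finrank
    rw [hK] at this
    simp at this
  obtain ⟨g, hg, i, hi⟩ := Fintype.not_linearIndependent_iff.1 hnl
  refine ⟨g, ?_, i, hi⟩
  have h2 := congrArg (Subtype.val) hg
  simpa using h2

lemma key3 {V : Type*} [AddCommGroup V] [Module ℝ V] (n : Fin 3 → V) (g : Fin 3 → ℝ)
    (hsum : ∑ i, g i • n i = 0) (i₀ : Fin 3) (h₀ : 0 < g i₀) :
    ∃ i j k : Fin 3, i ≠ j ∧ j ≠ k ∧ i ≠ k ∧
      ∃ β γ α : ℝ, 0 ≤ β ∧ 0 ≤ γ ∧ β + γ ≠ 0 ∧ α • n i = β • n j + γ • n k := by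
  rw [Fin.sum_univ_three] at hsum
  fin_cases i₀
  · rcases signcases (n 0) (n 1) (n 2) (g 0) (g 1) (g 2) h₀ hsum with
      ⟨β,γ,α,h1,h2,h3,h4⟩|⟨β,γ,α,h1,h2,h3,h4⟩|⟨β,γ,α,h1,h2,h3,h4⟩
    · exact ⟨0,1,2, by decide, by decide, by decide, β,γ,α,h1,h2,h3,h4⟩
    · exact ⟨1,0,2, by decide, by decide, by decide, β,γ,α,h1,h2,h3,h4⟩
    · exact ⟨2,0,1, by decide, by decide, by decide, β,γ,α,h1,h2,h3,h4⟩
  · have hsum' : g 1 • n 1 + g 0 • n 0 + g 2 • n 2 = 0 := by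
      linear_combination (norm := module) hsum
    rcases signcases (n 1) (n 0) (n 2) (g 1) (g 0) (g 2) h₀ hsum' with
      ⟨β,γ,α,h1,h2,h3,h4⟩|⟨β,γ,α,h1,h2,h3,h4⟩|⟨β,γ,α,h1,h2,h3,h4⟩
    · exact ⟨1,0,2, by decide, by decide, by decide, β,γ,α,h1,h2,h3,h4⟩
    · exact ⟨0,1,2, by decide, by decide, by decide, β,γ,α,h1,h2,h3,h4⟩
    · exact ⟨2,1,0, by decide, by decide, by decide, β,γ,α,h1,h2,h3,h4⟩
  · have hsum' : g 2 • n 2 + g 0 • n 0 + g 1 • n 1 = 0 := by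
      linear_combination (norm := module) hsum
    rcases signcases (n 2) (n 0) (n 1) (g 2) (g 0) (g 1) h₀ hsum' with
      ⟨β,γ,α,h1,h2,h3,h4⟩|⟨β,γ,α,h1,h2,h3,h4⟩|⟨β,γ,α,h1,h2,h3,h4⟩
    · exact ⟨2,0,1, by decide, by decide, by decide, β,γ,α,h1,h2,h3,h4⟩
    · exact ⟨0,2,1, by decide, by decide, by decide, β,γ,α,h1,h2,h3,h4⟩
    · exact ⟨1,2,0, by decide, by decide, by decide, β,γ,α,h1,h2,h3,h4⟩


open scoped RealInnerProductSpace in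
/-- Three unbiased qubit measurements whose Bloch vectors lie in a common plane through the
origin are not fully incompatible w.r.t. disjoint-convex-mixing: some measurement is jointly
measurable with some disjoint convex mixture of the other two. -/
theorem coplanar_not_fully_incompatible_convex_mixing
    (n : Fin 3 → EuclideanSpace ℝ (Fin 3)) (hn : ∀ i, ‖n i‖ ≤ 1)
    (w : EuclideanSpace ℝ (Fin 3)) (hw : w ≠ 0) (hperp : ∀ i, ⟪w, n i⟫ = 0) :
    ∃ (i j k : Fin 3) (q : ℝ), i ≠ j ∧ j ≠ k ∧ i ≠ k ∧ q ∈ Set.Icc (0 : ℝ) 1 ∧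
      JointlyMeasurable (bloch (n i))
        (fun z => (q : ℂ) • bloch (n j) z + ((1 - q : ℝ) : ℂ) • bloch (n k) z) := by
  obtain ⟨g, hgsum, i₀, hi₀⟩ := dep n w hw hperp
  have key : ∃ i j k : Fin 3, i ≠ j ∧ j ≠ k ∧ i ≠ k ∧
      ∃ β γ α : ℝ, 0 ≤ β ∧ 0 ≤ γ ∧ β + γ ≠ 0 ∧ α • n i = β • n j + γ • n k := by
    rcases hi₀.lt_or_gt with hneg|hpos
    · have hsum' : ∑ i, (fun i => -g i) i • n i = 0 := by
        rw [Fin.sum_univ_three] at hgsum ⊢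
        simp only
        linear_combination (norm := module) (-1 : ℝ) • hgsum
      exact key3 n (fun i => -g i) hsum' i₀ (by simpa using hneg)
    · exact key3 n g hgsum i₀ hpos
  obtain ⟨i, j, k, hij, hjk, hik, β, γ, α, h1, h2, h3, h4⟩ := key
  obtain ⟨q, hq, t, hmix⟩ := mix_of_sum (n i) (n j) (n k) α β γ h4 h1 h2 h3
  exact ⟨i, j, k, q, hij, hjk, hik, hq,
    jm_mix (n i) (n j) (n k) (hn i) (hn j) (hn k) q hq t hmix⟩
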